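/- With p(ω) denoting, for each ω ∈ [0,1), the unique solution in [θ*,1) of ψ(p(ω)) = ω, the expected ex-post optimal posted-price profit satisfies the identity ∫₀¹ (1−F(p(ω)))·(p(ω)−ω) g(ω) dω = ∫_{θ*}^1 𝒢(ψ(θ)) f(θ) dθ. -/

import Mathlib

open MeasureTheory Set

/-- `F(x) = ∫₀^x f`, with the convention that it is `0` for `x ≤ 0`. -/
noncomputable def cdf (f : ℝ → ℝ) (x : ℝ) : ℝ := ∫ t in Set.Ioc (0:ℝ) x, f t

/-- `𝒢(x) = ∫₀^x G(y) dy`, the left-hand integral of the cdf of `g` (`= 0` for `x ≤ 0`). -/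
noncomputable def calG (g : ℝ → ℝ) (x : ℝ) : ℝ := ∫ y in Set.Ioc (0:ℝ) x, cdf g y

/-- `μ = ∫₀¹ ω g(ω) dω`, the mean cost. -/
noncomputable def muG (g : ℝ → ℝ) : ℝ := ∫ t in Set.Ioc (0:ℝ) 1, t * g t

/-- The virtual valuation `ψ(θ) = θ − (1 − F(θ))/f(θ)`. -/
noncomputable def psi (f : ℝ → ℝ) (θ : ℝ) : ℝ := θ - (1 - cdf f θ) / f θ

lemma cdf_continuousOn (f : ℝ → ℝ) (hf_int : IntegrableOn f (Icc 0 1)) :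
    ContinuousOn (cdf f) (Icc 0 1) := by
  delta cdf; simpa [cdf] using intervalIntegral.continuousOn_primitive (f := f) (a := (0:ℝ)) (b := 1)
    (μ := volume) hf_int

lemma hasDerivAt_cdf (f : ℝ → ℝ) (hf_int : IntegrableOn f (Icc 0 1))
    (hf_cont : ContinuousOn f (Icc 0 1)) {θ : ℝ} (hθ : θ ∈ Ioo (0:ℝ) 1) :
    HasDerivAt (cdf f) (f θ) θ := by
  have hnhds : Icc (0:ℝ) 1 ∈ nhds θ := Icc_mem_nhds hθ.1 hθ.2
  have h1 : IntervalIntegrable f volume 0 θ := by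
    apply IntegrableOn.intervalIntegrable
    apply hf_int.mono_set
    rw [Set.uIcc_of_le hθ.1.le]
    exact Icc_subset_Icc le_rfl hθ.2.le
  have h2 : StronglyMeasurableAtFilter f (nhds θ) :=
    ⟨Icc 0 1, hnhds, hf_int.aestronglyMeasurable⟩
  have h3 : ContinuousAt f θ := hf_cont.continuousAt hnhds
  have h4 := intervalIntegral.integral_hasDerivAt_right h1 h2 h3
  refine HasDerivAt.congr_of_eventuallyEq h4 ?_
  filter_upwards [Ioi_mem_nhds hθ.1] with x hx
  rw [intervalIntegral.integral_of_le (le_of_lt hx)]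
  rfl

lemma step1 (f : ℝ → ℝ) (hf_int : IntegrableOn f (Icc 0 1)) (hf_cont : ContinuousOn f (Icc 0 1))
    (hf_pos : ∀ t ∈ Icc (0:ℝ) 1, 0 < f t) (hf_one : cdf f 1 = 1)
    {q : ℝ} (hq0 : 0 < q) (hq1 : q ≤ 1) (ω : ℝ) :
    ∫ θ in q..1, (psi f θ - ω) * f θ = (1 - cdf f q) * (q - ω) := by
  have hFcont : ContinuousOn (cdf f) (Icc 0 1) := cdf_continuousOn f hf_int
  have key : ∀ θ ∈ Set.uIcc q 1, (psi f θ - ω) * f θ = (cdf f θ - 1) + (θ - ω) * f θ := by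
    intro θ hθ
    rw [Set.uIcc_of_le hq1] at hθ
    have hθ' : θ ∈ Icc (0:ℝ) 1 := ⟨le_trans hq0.le hθ.1, hθ.2⟩
    have hfθ := (hf_pos θ hθ').ne'
    unfold psi
    field_simp
    ring
  rw [intervalIntegral.integral_congr key]
  have hsub : Icc q 1 ⊆ Icc (0:ℝ) 1 := Icc_subset_Icc hq0.le le_rfl
  have hint : IntervalIntegrable (fun θ => (cdf f θ - 1) + (θ - ω) * f θ) volume q 1 := by
    apply ContinuousOn.intervalIntegrable
    rw [Set.uIcc_of_le hq1]
    exact ((hFcont.mono hsub).sub continuousOn_const).add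
      ((continuousOn_id.sub continuousOn_const).mul (hf_cont.mono hsub))
  have hcontφ : ContinuousOn (fun θ => (θ - ω) * (cdf f θ - 1)) (Icc q 1) :=
    (continuousOn_id.sub continuousOn_const).mul ((hFcont.mono hsub).sub continuousOn_const)
  have hder : ∀ θ ∈ Ioo q 1, HasDerivWithinAt (fun θ => (θ - ω) * (cdf f θ - 1))
      ((cdf f θ - 1) + (θ - ω) * f θ) (Ioi θ) θ := by
    intro θ hθ
    have hθ' : θ ∈ Ioo (0:ℝ) 1 := ⟨lt_trans hq0 hθ.1, hθ.2⟩
    have hF := hasDerivAt_cdf f hf_int hf_cont hθ'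
    have h := ((hasDerivAt_id θ).sub_const ω).mul (hF.sub_const 1)
    have h' : HasDerivAt (fun θ => (θ - ω) * (cdf f θ - 1)) ((cdf f θ - 1) + (θ - ω) * f θ) θ := by
      convert h using 1
      · rfl
      · rfl
      · rfl
      · simp only [id_eq]; ring
    exact h'.hasDerivWithinAt
  rw [intervalIntegral.integral_eq_sub_of_hasDeriv_right_of_le hq1 hcontφ hder hint, hf_one]
  ring

lemma calG_eq (g : ℝ → ℝ) (hg_int : IntegrableOn g (Icc 0 1))
    {x : ℝ} (hx0 : 0 ≤ x) (hx1 : x ≤ 1) :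
    calG g x = ∫ ω in Ioc (0:ℝ) 1, g ω * max (x - ω) 0 := by
  classical
  set μx := volume.restrict (Ioc (0:ℝ) x) with hμx
  set μ1 := volume.restrict (Ioc (0:ℝ) 1) with hμ1
  have hg' : IntegrableOn g (Ioc (0:ℝ) 1) := hg_int.mono_set Ioc_subset_Icc_self
  have hSmeas : MeasurableSet {q : ℝ × ℝ | q.2 ≤ q.1} :=
    measurableSet_le measurable_snd measurable_fst
  have hprod : Integrable (fun q : ℝ × ℝ => (1:ℝ) * g q.2) (μx.prod μ1) :=
    (integrable_const (1:ℝ)).mul_prod hg'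
  have hgsnd : AEStronglyMeasurable (fun q : ℝ × ℝ => g q.2) (μx.prod μ1) := by
    simpa using hprod.aestronglyMeasurable
  set H : ℝ × ℝ → ℝ := fun q => ({q : ℝ × ℝ | q.2 ≤ q.1}).indicator (fun q => g q.2) q with hHdef
  have hHmeas : AEStronglyMeasurable H (μx.prod μ1) := hgsnd.indicator hSmeas
  have hHint : Integrable H (μx.prod μ1) := by
    apply Integrable.mono' hprod.norm hHmeas
    filter_upwards with q
    simpa using norm_indicator_le_norm_self (fun q : ℝ × ℝ => g q.2) q
  have hswap := MeasureTheory.integral_integral_swap (μ := μx) (ν := μ1)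
    (f := fun y ω => H (y, ω)) (by exact hHint)
  have hleft : ∫ y, (∫ ω, H (y, ω) ∂μ1) ∂μx = calG g x := by
    rw [hμx, calG]
    apply setIntegral_congr_fun measurableSet_Ioc
    intro y hy
    have hHy : ∀ ω : ℝ, H (y, ω) = (Iic y).indicator g ω := by
      intro ω
      simp [hHdef, Set.indicator_apply]
    simp_rw [hHy]
    rw [hμ1, integral_indicator measurableSet_Iic, Measure.restrict_restrict measurableSet_Iic]
    have : Iic y ∩ Ioc (0:ℝ) 1 = Ioc (0:ℝ) y := by
      ext ω
      simp only [mem_inter_iff, mem_Iic, mem_Ioc]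
      constructor
      · rintro ⟨h1, h2, h3⟩; exact ⟨h2, h1⟩
      · rintro ⟨h1, h2⟩; exact ⟨h2, h1, le_trans h2 (le_trans hy.2 hx1)⟩
    rw [this]
    rfl
  have hright : ∫ ω, (∫ y, H (y, ω) ∂μx) ∂μ1 = ∫ ω in Ioc (0:ℝ) 1, g ω * max (x - ω) 0 := by
    rw [hμ1]
    apply setIntegral_congr_fun measurableSet_Ioc
    intro ω hω
    have hHω : ∀ y : ℝ, H (y, ω) = (Ici ω).indicator (fun _ => g ω) y := by
      intro y
      simp [hHdef, Set.indicator_apply]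
    simp_rw [hHω]
    rw [hμx, integral_indicator measurableSet_Ici, Measure.restrict_restrict measurableSet_Ici]
    have : Ici ω ∩ Ioc (0:ℝ) x = Icc ω x := by
      ext y
      simp only [mem_inter_iff, mem_Ici, mem_Ioc, mem_Icc]
      constructor
      · rintro ⟨h1, _, h3⟩; exact ⟨h1, h3⟩
      · rintro ⟨h1, h2⟩; exact ⟨h1, lt_of_lt_of_le hω.1 h1, h2⟩
    rw [this, setIntegral_const, Real.volume_real_Icc, smul_eq_mul, mul_comm]
  rw [← hleft, hswap, hright]

/-- with `p(ω)` the unique solution in `[θ*,1)` of `ψ(p(ω)) = ω`, the expected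
ex-post optimal posted-price profit satisfies
`∫₀¹ (1−F(p(ω)))·(p(ω)−ω) g(ω) dω = ∫_{θ*}^1 𝒢(ψ(θ)) f(θ) dθ`. -/
theorem stmt8
    (f g : ℝ → ℝ)
    (hf_int : IntegrableOn f (Set.Icc 0 1))
    (hg_int : IntegrableOn g (Set.Icc 0 1))
    (hf_ae : ∀ᵐ t, t ∈ Set.Icc (0:ℝ) 1 → 0 < f t)
    (hg_ae : ∀ᵐ t, t ∈ Set.Icc (0:ℝ) 1 → 0 < g t)
    (hf_one : cdf f 1 = 1)
    (hg_one : cdf g 1 = 1)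
    (hf_cont : ContinuousOn f (Set.Icc 0 1))
    (hf_pos : ∀ t ∈ Set.Icc (0:ℝ) 1, 0 < f t)
    (hpsi_mono : StrictMonoOn (psi f) (Set.Icc 0 1))
    (θs : ℝ) (hθs : θs ∈ Set.Ioo (0:ℝ) 1) (hθs0 : psi f θs = 0)
    (p : ℝ → ℝ)
    (hp : ∀ ω ∈ Set.Ico (0:ℝ) 1, p ω ∈ Set.Ico θs 1 ∧ psi f (p ω) = ω) :
    (∫ ω in (0:ℝ)..1, (1 - cdf f (p ω)) * (p ω - ω) * g ω) =
      ∫ θ in θs..1, calG g (psi f θ) * f θ := by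
  classical
  obtain ⟨hθs0', hθs1⟩ := hθs
  have hFcont : ContinuousOn (cdf f) (Icc 0 1) := cdf_continuousOn f hf_int
  have hpsicont : ContinuousOn (psi f) (Icc 0 1) := by
    unfold psi
    exact ContinuousOn.sub (continuous_id.continuousOn) ((continuousOn_const.sub hFcont).div hf_cont
      (fun t ht => (hf_pos t ht).ne'))
  have hpsi1 : psi f 1 = 1 := by
    unfold psi; rw [hf_one]; simp
  have hpsimono' : MonotoneOn (psi f) (Icc 0 1) := hpsi_mono.monotoneOn
  set μθ := volume.restrict (Ioc θs 1) with hμθ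
  set μω := volume.restrict (Ioc (0:ℝ) 1) with hμω
  have hg' : IntegrableOn g (Ioc (0:ℝ) 1) := hg_int.mono_set Ioc_subset_Icc_self
  have hf' : IntegrableOn f (Ioc θs 1) :=
    hf_int.mono_set (fun t ht => ⟨le_trans hθs0'.le ht.1.le, ht.2⟩)
  have hprod : Integrable (fun q : ℝ × ℝ => f q.1 * g q.2) (μθ.prod μω) := hf'.mul_prod hg'
  -- measurability of the max part
  have hmaxmeas : AEStronglyMeasurable (fun q : ℝ × ℝ => max (psi f q.1 - q.2) 0) (μθ.prod μω) := by
    have hc : ContinuousOn (fun q : ℝ × ℝ => max (psi f q.1 - q.2) 0) (Icc θs 1 ×ˢ Icc (0:ℝ) 1) := by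
      apply ContinuousOn.sup _ continuousOn_const
      apply ContinuousOn.sub _ continuous_snd.continuousOn
      exact (hpsicont.mono (Icc_subset_Icc hθs0'.le le_rfl)).comp continuous_fst.continuousOn
        (fun q hq => hq.1)
    have hm := hc.aemeasurable (measurableSet_Icc.prod measurableSet_Icc)
      (μ := volume.prod volume)
    rw [hμθ, hμω, Measure.prod_restrict]
    exact (hm.mono_measure (Measure.restrict_mono
      (Set.prod_mono Ioc_subset_Icc_self Ioc_subset_Icc_self) le_rfl)).aestronglyMeasurable
  set K : ℝ × ℝ → ℝ := fun q => f q.1 * g q.2 * max (psi f q.1 - q.2) 0 with hKdef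
  have hae : ∀ᵐ q : ℝ × ℝ ∂(μθ.prod μω), q ∈ Ioc θs 1 ×ˢ Ioc (0:ℝ) 1 := by
    rw [hμθ, hμω, Measure.prod_restrict]
    exact ae_restrict_mem (measurableSet_Ioc.prod measurableSet_Ioc)
  have hKint : Integrable K (μθ.prod μω) := by
    apply Integrable.mono' hprod.norm (hprod.aestronglyMeasurable.mul hmaxmeas)
    filter_upwards [hae] with q hq
    have hq1 : q.1 ∈ Icc (0:ℝ) 1 := ⟨le_trans hθs0'.le hq.1.1.le, hq.1.2⟩
    have hψle : psi f q.1 ≤ 1 := by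
      rw [← hpsi1]
      exact hpsimono' hq1 (right_mem_Icc.2 zero_le_one) hq1.2
    have hmax1 : max (psi f q.1 - q.2) 0 ≤ 1 :=
      max_le (by linarith [hq.2.1]) zero_le_one
    have hmax0 : 0 ≤ max (psi f q.1 - q.2) 0 := le_max_right _ _
    calc ‖K q‖ = ‖f q.1 * g q.2‖ * |max (psi f q.1 - q.2) 0| := by
          rw [hKdef]; simp [abs_mul]
      _ ≤ ‖f q.1 * g q.2‖ * 1 := by
          apply mul_le_mul_of_nonneg_left _ (norm_nonneg _)
          rw [abs_of_nonneg hmax0]; exact hmax1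
      _ = ‖f q.1 * g q.2‖ := mul_one _
  have hswap := MeasureTheory.integral_integral_swap (μ := μθ) (ν := μω)
    (f := fun θ ω => K (θ, ω)) (by exact hKint)
  -- RHS equals the iterated integral θ-first
  have hRHS : ∫ θ, (∫ ω, K (θ, ω) ∂μω) ∂μθ = ∫ θ in Ioc θs 1, calG g (psi f θ) * f θ := by
    rw [hμθ]
    apply setIntegral_congr_fun measurableSet_Ioc
    intro θ hθ
    have hθ' : θ ∈ Icc (0:ℝ) 1 := ⟨le_trans hθs0'.le hθ.1.le, hθ.2⟩
    have hψ0 : 0 ≤ psi f θ := by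
      rw [← hθs0]
      exact hpsimono' ⟨hθs0'.le, hθs1.le⟩ hθ' hθ.1.le
    have hψ1 : psi f θ ≤ 1 := by
      rw [← hpsi1]
      exact hpsimono' hθ' (right_mem_Icc.2 zero_le_one) hθ'.2
    show (∫ ω, K (θ, ω) ∂μω) = calG g (psi f θ) * f θ
    rw [calG_eq g hg_int hψ0 hψ1]
    rw [show (∫ ω in Ioc (0:ℝ) 1, g ω * max (psi f θ - ω) 0) * f θ
        = f θ * ∫ ω in Ioc (0:ℝ) 1, g ω * max (psi f θ - ω) 0 from mul_comm _ _]
    rw [← integral_const_mul]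
    rw [hμω]
    apply setIntegral_congr_fun measurableSet_Ioc
    intro ω hω
    simp only [hKdef]
    ring
  -- LHS equals the iterated integral ω-first
  have hLHS : ∫ ω, (∫ θ, K (θ, ω) ∂μθ) ∂μω
      = ∫ ω in Ioc (0:ℝ) 1, (1 - cdf f (p ω)) * (p ω - ω) * g ω := by
    rw [hμω]
    apply integral_congr_ae
    have hne1 : ∀ᵐ ω ∂(volume.restrict (Ioc (0:ℝ) 1)), ω ≠ 1 := by
      rw [ae_iff]
      apply measure_mono_null (t := {(1:ℝ)}) (fun a ha => by simpa using ha)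
      exact le_antisymm (le_trans (Measure.restrict_le_self _)
        (le_of_eq (Real.volume_singleton))) zero_le
    filter_upwards [ae_restrict_mem measurableSet_Ioc, hne1] with ω hω hne
    have hω' : ω ∈ Ico (0:ℝ) 1 := ⟨hω.1.le, lt_of_le_of_ne hω.2 hne⟩
    obtain ⟨hpmem, hpψ⟩ := hp ω hω'
    have hpIcc : p ω ∈ Icc (0:ℝ) 1 := ⟨le_trans hθs0'.le hpmem.1, hpmem.2.le⟩
    have hpθs : θs < p ω := by
      rcases lt_or_eq_of_le hpmem.1 with h | h
      · exact h
      · exfalso; rw [← h] at hpψ; rw [hθs0] at hpψ; exact absurd hpψ.symm (ne_of_gt hω.1)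
    have hinner : ∫ θ, K (θ, ω) ∂μθ = (1 - cdf f (p ω)) * (p ω - ω) * g ω := by
      have hKeq : ∀ θ ∈ Ioc θs 1, K (θ, ω)
          = (Ici (p ω)).indicator (fun θ => (psi f θ - ω) * f θ * g ω) θ := by
        intro θ hθ
        have hθ' : θ ∈ Icc (0:ℝ) 1 := ⟨le_trans hθs0'.le hθ.1.le, hθ.2⟩
        rcases le_or_gt (p ω) θ with h | h
        · have hψge : ω ≤ psi f θ := by
            rw [← hpψ]; exact hpsimono' hpIcc hθ' h
          rw [Set.indicator_of_mem (mem_Ici.2 h)]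
          simp only [hKdef]
          rw [max_eq_left (by linarith)]
          ring
        · have hψlt : psi f θ < ω := by
            rw [← hpψ]; exact hpsi_mono hθ' hpIcc h
          rw [Set.indicator_of_notMem (by simpa using not_le.2 h)]
          simp only [hKdef]
          rw [max_eq_right (by linarith)]
          ring
      rw [hμθ, setIntegral_congr_fun measurableSet_Ioc hKeq,
        integral_indicator measurableSet_Ici, Measure.restrict_restrict measurableSet_Ici]
      have hset : Ici (p ω) ∩ Ioc θs 1 = Icc (p ω) 1 := by
        ext θ
        simp only [mem_inter_iff, mem_Ici, mem_Ioc, mem_Icc]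
        constructor
        · rintro ⟨h1, _, h3⟩; exact ⟨h1, h3⟩
        · rintro ⟨h1, h2⟩; exact ⟨h1, lt_of_lt_of_le hpθs h1, h2⟩
      rw [hset, ← Measure.restrict_congr_set (Ioc_ae_eq_Icc),
        ← intervalIntegral.integral_of_le hpmem.2.le]
      rw [intervalIntegral.integral_mul_const]
      rw [step1 f hf_int hf_cont hf_pos hf_one (lt_trans hθs0' hpθs) hpmem.2.le ω]
    simpa using hinner
  rw [intervalIntegral.integral_of_le hθs1.le, intervalIntegral.integral_of_le zero_le_one,
    ← hRHS, hswap, hLHS]
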